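/- Let A be an M×N quaternion matrix with A = A_h + A_v·j (A_h, A_v complex matrices). If A is a perfect quaternion array, i.e., R_A(m,n) = 0 for all (m,n) ≠ (0,0), then R_{A_h}(m,n) + R_{A_v}(m,n) = 0 for all (m,n) ≠ (0,0); that is, A_h and A_v form a periodic complementary pair. -/

import Mathlib

noncomputable section
open scoped BigOperators

/-- Embedding of ℂ into the quaternions (zero j and k components). -/
def cq (z : ℂ) : Quaternion ℝ := ⟨z.re, z.im, 0, 0⟩

/-- The quaternion unit i. -/
def qi : Quaternion ℝ := ⟨0, 1, 0, 0⟩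

/-- The quaternion unit j. -/
def qj : Quaternion ℝ := ⟨0, 0, 1, 0⟩

/-- The quaternion unit k. -/
def qk : Quaternion ℝ := ⟨0, 0, 0, 1⟩

/-- Conjugate-free periodic cross-correlation of quaternion matrices. -/
def qcorr {M N : ℕ} [NeZero M] [NeZero N]
    (X Y : Matrix (ZMod M) (ZMod N) (Quaternion ℝ)) :
    Matrix (ZMod M) (ZMod N) (Quaternion ℝ) :=
  fun m n => ∑ k, ∑ l, X k l * Y (k + m) (l + n)

/-- Right periodic autocorrelation of a quaternion matrix. -/
def Rq {M N : ℕ} [NeZero M] [NeZero N]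
    (A : Matrix (ZMod M) (ZMod N) (Quaternion ℝ)) :
    Matrix (ZMod M) (ZMod N) (Quaternion ℝ) :=
  qcorr A (fun k l => star (A k l))

/-- Conjugate-free periodic cross-correlation of complex matrices. -/
def ccorr {M N : ℕ} [NeZero M] [NeZero N]
    (X Y : Matrix (ZMod M) (ZMod N) ℂ) : Matrix (ZMod M) (ZMod N) ℂ :=
  fun m n => ∑ k, ∑ l, X k l * Y (k + m) (l + n)

/-- Complex 2D periodic autocorrelation. -/
def Rc {M N : ℕ} [NeZero M] [NeZero N]
    (A : Matrix (ZMod M) (ZMod N) ℂ) : Matrix (ZMod M) (ZMod N) ℂ :=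
  ccorr A (fun k l => star (A k l))


lemma cq_re (z : ℂ) : (cq z).re = z.re := rfl
lemma cq_imI (z : ℂ) : (cq z).imI = z.im := rfl
lemma cq_imJ (z : ℂ) : (cq z).imJ = 0 := rfl
lemma cq_imK (z : ℂ) : (cq z).imK = 0 := rfl
lemma qj_re : qj.re = 0 := rfl
lemma qj_imI : qj.imI = 0 := rfl
lemma qj_imJ : qj.imJ = 1 := rfl
lemma qj_imK : qj.imK = 0 := rfl

lemma key_mul_star (a b c d : ℂ) :
    (cq a + cq b * qj) * star (cq c + cq d * qj)
      = cq (a * star c + b * star d) + cq (b * c - a * d) * qj := by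
  apply Quaternion.ext <;>
    simp [cq_re, cq_imI, cq_imJ, cq_imK, qj_re, qj_imI, qj_imJ, qj_imK, Quaternion.re_mul, Quaternion.imI_mul, Quaternion.imJ_mul,
      Quaternion.imK_mul, Quaternion.re_add, Quaternion.imI_add, Quaternion.imJ_add, Quaternion.imK_add, Complex.ext_iff] <;> ring

lemma cq_add (a b : ℂ) : cq (a + b) = cq a + cq b := by
  apply Quaternion.ext <;> simp [cq_re, cq_imI, cq_imJ, cq_imK, Quaternion.re_add, Quaternion.imI_add, Quaternion.imJ_add, Quaternion.imK_add]

def cqHom : ℂ →+ Quaternion ℝ :=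
  { toFun := cq, map_zero' := by apply Quaternion.ext <;> simp [cq, Quaternion.re_zero, Quaternion.imI_zero, Quaternion.imJ_zero, Quaternion.imK_zero], map_add' := cq_add }

lemma cq_sum {α : Type*} (s : Finset α) (f : α → ℂ) :
    cq (∑ x ∈ s, f x) = ∑ x ∈ s, cq (f x) := map_sum cqHom f s

lemma cq_eq_zero_of (z w : ℂ) (h : cq z + cq w * qj = 0) : z = 0 := by
  have hre := congrArg QuaternionAlgebra.re h
  have him := congrArg QuaternionAlgebra.imI h
  simp [cq_re, cq_imI, cq_imJ, cq_imK, qj_re, qj_imI, qj_imJ, qj_imK, Quaternion.re_mul, Quaternion.imI_mul, Quaternion.re_add, Quaternion.imI_add, Quaternion.re_zero, Quaternion.imI_zero] at hre him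
  exact Complex.ext hre him

theorem pqa_components_form_pcp {M N : ℕ} [NeZero M] [NeZero N]
    (Ah Av : Matrix (ZMod M) (ZMod N) ℂ)
    (A : Matrix (ZMod M) (ZMod N) (Quaternion ℝ))
    (hA : ∀ k l, A k l = cq (Ah k l) + cq (Av k l) * qj)
    (hperf : ∀ m n, (m, n) ≠ (0, 0) → Rq A m n = 0) :
    ∀ m n, (m, n) ≠ (0, 0) → Rc Ah m n + Rc Av m n = 0 := by
  intro m n h
  apply cq_eq_zero_of _ (ccorr Av Ah m n - ccorr Ah Av m n)
  rw [← hperf m n h]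
  simp only [Rq, qcorr, hA, key_mul_star, Rc, ccorr, Finset.sum_add_distrib,
    Finset.sum_sub_distrib, Pi.add_apply, cq_add, ← Finset.sum_mul, ← cq_sum]
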